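/- arXiv:2308.06560 — 7 statements merged into one kernel-verified Lean document; each statement's English description precedes it below -/
import Mathlib

section
/- Let n ≥ 1 be a natural number and let V, X : ℝ → ℝ be differentiable on (0,∞) and satisfy n·V(r) − r·V′(r) = 2·X(r) − (4/r)·X′(r) for every r > 0. Then the function P(r) = V(r)/r^n − 4·X(r)/r^{n+2} is differentiable on (0,∞) with P′(r) = (2·X(r)/r^{n+1})·(2(n+2)/r² − 1) for every r > 0. -/
/-- Under Cao–Zhou's identity, the function
`P(r) = V(r)/r^n − 4·X(r)/r^{n+2}` is differentiable on `(0,∞)` with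
`P′(r) = (2·X(r)/r^{n+1})·(2(n+2)/r² − 1)`. -/
theorem shrinker_P_hasDerivAt (n : ℕ) (hn : 1 ≤ n) (V X : ℝ → ℝ)
    (hV : ∀ r > (0 : ℝ), DifferentiableAt ℝ V r)
    (hX : ∀ r > (0 : ℝ), DifferentiableAt ℝ X r)
    (hid : ∀ r > (0 : ℝ),
      (n : ℝ) * V r - r * deriv V r = 2 * X r - (4 / r) * deriv X r) :
    ∀ r > (0 : ℝ),
      HasDerivAt (fun s => V s / s ^ n - 4 * X s / s ^ (n + 2))
        ((2 * X r / r ^ (n + 1)) * (2 * ((n : ℝ) + 2) / r ^ 2 - 1)) r := by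
  intro r hr
  have hr0 : r ≠ 0 := ne_of_gt hr
  have hVd := (hV r hr).hasDerivAt
  have hXd := (hX r hr).hasDerivAt
  have h1 : HasDerivAt (fun s => V s / s ^ n)
      ((deriv V r * r ^ n - V r * ((n : ℝ) * r ^ (n - 1))) / (r ^ n) ^ 2) r :=
    hVd.div (hasDerivAt_pow n r) (pow_ne_zero n hr0)
  have h2 : HasDerivAt (fun s => 4 * X s / s ^ (n + 2))
      (((4 : ℝ) * deriv X r * r ^ (n + 2)
        - 4 * X r * (((n : ℝ) + 2) * r ^ (n + 1))) / (r ^ (n + 2)) ^ 2) r := by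
    have := (hXd.const_mul (4 : ℝ)).div (hasDerivAt_pow (n + 2) r)
      (pow_ne_zero (n + 2) hr0)
    rw [show n + 2 - 1 = n + 1 by omega] at this
    push_cast at this
    exact this
  have h := h1.sub h2
  refine h.congr_deriv ?_
  symm
  have key := hid r hr
  have hn1 : n - 1 + 1 = n := Nat.succ_pred_eq_of_pos hn
  have e1 : r ^ n = r ^ (n - 1) * r := by rw [← pow_succ, hn1]
  have e2 : r ^ (n + 1) = r ^ (n - 1) * r ^ 2 := by
    rw [← pow_add]; congr 1; omega
  have e3 : r ^ (n + 2) = r ^ (n - 1) * r ^ 3 := by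
    rw [← pow_add]
    congr 1
    omega
  have hm0 : r ^ (n - 1) ≠ 0 := pow_ne_zero _ hr0
  rw [e1, e2, e3]
  have key2 : (n : ℝ) * V r * r - r ^ 2 * deriv V r
      = 2 * X r * r - 4 * deriv X r := by
    field_simp at key
    linarith [key]
  field_simp
  linear_combination r * key2
end

section
/- Let n ≥ 1 be a natural number and let V, X : ℝ → ℝ be differentiable on (0,∞) and satisfy n·V(r) − r·V′(r) = 2·X(r) − (4/r)·X′(r) for every r > 0. If in addition X(r) ≥ 0 for every r > 0, then the function P(r) = V(r)/r^n − 4·X(r)/r^{n+2} is non-increasing on the interval [√(2(n+2)), ∞). -/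
/-- Under Cao–Zhou's identity and `X ≥ 0` on `(0,∞)`, the function
`P(r) = V(r)/r^n − 4·X(r)/r^{n+2}` is non-increasing on `[√(2(n+2)), ∞)`. -/
theorem shrinker_P_antitone (n : ℕ) (hn : 1 ≤ n) (V X : ℝ → ℝ)
    (hV : ∀ r > (0 : ℝ), DifferentiableAt ℝ V r)
    (hX : ∀ r > (0 : ℝ), DifferentiableAt ℝ X r)
    (hid : ∀ r > (0 : ℝ),
      (n : ℝ) * V r - r * deriv V r = 2 * X r - (4 / r) * deriv X r)
    (hX0 : ∀ r > (0 : ℝ), 0 ≤ X r) :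
    AntitoneOn (fun s => V s / s ^ n - 4 * X s / s ^ (n + 2))
      (Set.Ici (Real.sqrt (2 * ((n : ℝ) + 2)))) := by
  set a := Real.sqrt (2 * ((n : ℝ) + 2)) with ha
  have hapos : 0 < a := Real.sqrt_pos.mpr (by positivity)
  have ha2 : a ^ 2 = 2 * ((n : ℝ) + 2) := Real.sq_sqrt (by positivity)
  have hdiff : ∀ r : ℝ, 0 < r → DifferentiableAt ℝ
      (fun s => V s / s ^ n - 4 * X s / s ^ (n + 2)) r := by
    intro r hr
    have h1 : DifferentiableAt ℝ (fun s : ℝ => s ^ n) r := differentiableAt_pow n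
    have h2 : DifferentiableAt ℝ (fun s : ℝ => s ^ (n + 2)) r := differentiableAt_pow _
    exact ((hV r hr).div h1 (pow_ne_zero _ hr.ne')).sub
      (((hX r hr).const_mul 4).div h2 (pow_ne_zero _ hr.ne'))
  apply antitoneOn_of_deriv_nonpos (convex_Ici a)
  · intro r hr
    exact (hdiff r (lt_of_lt_of_le hapos hr)).continuousAt.continuousWithinAt
  · rw [interior_Ici]
    intro r hr
    exact (hdiff r (lt_trans hapos hr)).differentiableWithinAt
  · rw [interior_Ici]
    intro r hr
    have hr0 : 0 < r := lt_trans hapos hr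
    have hrn : r ≠ 0 := hr0.ne'
    have hr2 : 2 * ((n : ℝ) + 2) ≤ r ^ 2 := by
      rw [← ha2]
      exact pow_le_pow_left₀ hapos.le (le_of_lt hr) 2
    obtain ⟨m, rfl⟩ : ∃ m, n = m + 1 := ⟨n - 1, by omega⟩
    have hp1 : HasDerivAt (fun s : ℝ => s ^ (m + 1)) (((m : ℝ) + 1) * r ^ m) r := by
      simpa using hasDerivAt_pow (m + 1) r
    have hp2 : HasDerivAt (fun s : ℝ => s ^ (m + 1 + 2)) (((m : ℝ) + 3) * r ^ (m + 2)) r := by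
      have := hasDerivAt_pow (m + 3) r
      push_cast at this ⊢
      convert this using 2 <;> ring
    have h1 : HasDerivAt (fun s => V s / s ^ (m + 1))
        ((deriv V r * r ^ (m + 1) - V r * (((m : ℝ) + 1) * r ^ m)) / (r ^ (m + 1)) ^ 2) r :=
      (hV r hr0).hasDerivAt.div hp1 (pow_ne_zero _ hrn)
    have h2 : HasDerivAt (fun s => 4 * X s / s ^ (m + 1 + 2))
        ((4 * deriv X r * r ^ (m + 1 + 2) - 4 * X r * (((m : ℝ) + 3) * r ^ (m + 2))) / (r ^ (m + 1 + 2)) ^ 2) r := by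
      have := ((hX r hr0).hasDerivAt.const_mul 4).div hp2 (pow_ne_zero _ hrn)
      simpa [mul_comm, Pi.div_def] using this
    have hP := h1.sub h2
    rw [show deriv (fun s => V s / s ^ (m + 1) - 4 * X s / s ^ (m + 1 + 2)) r = _ from hP.deriv]
    have hkey : ((m : ℝ) + 1) * V r * r - r ^ 2 * deriv V r = 2 * X r * r - 4 * deriv X r := by
      have h := hid r hr0
      push_cast at h
      field_simp at h
      nlinarith [h]
    have heq : (deriv V r * r ^ (m + 1) - V r * (((m : ℝ) + 1) * r ^ m)) / (r ^ (m + 1)) ^ 2 -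
        (4 * deriv X r * r ^ (m + 1 + 2) - 4 * X r * (((m : ℝ) + 3) * r ^ (m + 2))) / (r ^ (m + 1 + 2)) ^ 2
        = 2 * X r * (2 * ((m : ℝ) + 3) - r ^ 2) / r ^ (m + 4) := by
      field_simp
      linear_combination (-(r ^ 9 * r ^ (m * 4))) * hkey
    rw [heq]
    apply div_nonpos_of_nonpos_of_nonneg
    · have hx := hX0 r hr0
      have : 2 * ((m : ℝ) + 3) - r ^ 2 ≤ 0 := by push_cast at hr2; linarith
      nlinarith
    · positivity
end

section
/- Let n ≥ 1 be a natural number and let V, X : ℝ → ℝ be differentiable on (0,∞) and satisfy n·V(r) − r·V′(r) = 2·X(r) − (4/r)·X′(r) for every r > 0. Assume X(r) ≥ 0 for all r > 0, X is non-decreasing on (0,∞), and P(r) = V(r)/r^n − 4·X(r)/r^{n+2} converges to a real number L as r → ∞. Then for every r ≥ √(2(n+2)) one has L − P(r) ≤ X(r)·(4/r^{n+2} − 2/(n·r^n)), and consequently X(r)/r^n ≤ (n/2)·(V(r)/r^n − L). -/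
open Filter

/-- Under Cao–Zhou's identity, `X ≥ 0`, `X` non-decreasing on `(0,∞)`,
and `P(r) = V(r)/r^n − 4X(r)/r^{n+2} → L` as `r → ∞`, for every `r ≥ √(2(n+2))` one has
`L − P(r) ≤ X(r)·(4/r^{n+2} − 2/(n·r^n))` and thus `X(r)/r^n ≤ (n/2)·(V(r)/r^n − L)`. -/
theorem shrinker_X_decay (n : ℕ) (hn : 1 ≤ n) (V X : ℝ → ℝ)
    (hV : ∀ r > (0 : ℝ), DifferentiableAt ℝ V r)
    (hX : ∀ r > (0 : ℝ), DifferentiableAt ℝ X r)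
    (hid : ∀ r > (0 : ℝ),
      (n : ℝ) * V r - r * deriv V r = 2 * X r - (4 / r) * deriv X r)
    (hX0 : ∀ r > (0 : ℝ), 0 ≤ X r)
    (hXmono : MonotoneOn X (Set.Ioi 0))
    (L : ℝ)
    (hP : Tendsto (fun s => V s / s ^ n - 4 * X s / s ^ (n + 2)) atTop (nhds L)) :
    ∀ r, Real.sqrt (2 * ((n : ℝ) + 2)) ≤ r →
      L - (V r / r ^ n - 4 * X r / r ^ (n + 2)) ≤
          X r * (4 / r ^ (n + 2) - 2 / ((n : ℝ) * r ^ n)) ∧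
        X r / r ^ n ≤ ((n : ℝ) / 2) * (V r / r ^ n - L) := by
  obtain ⟨m, rfl⟩ : ∃ m, n = m + 1 := ⟨n - 1, (Nat.succ_pred_eq_of_pos hn).symm⟩
  intro r hr
  have h6 : (0:ℝ) < 2 * (((m+1:ℕ):ℝ) + 2) := by positivity
  have hr0 : 0 < r := lt_of_lt_of_le (Real.sqrt_pos.mpr h6) hr
  have hr2 : 2 * (((m+1:ℕ):ℝ) + 2) ≤ r ^ 2 := by
    calc 2 * (((m+1:ℕ):ℝ) + 2) = Real.sqrt (2 * (((m+1:ℕ):ℝ) + 2)) ^ 2 :=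
      (Real.sq_sqrt h6.le).symm
    _ ≤ r ^ 2 := by
      have := Real.sqrt_nonneg (2 * (((m+1:ℕ):ℝ) + 2))
      nlinarith
  set F : ℝ → ℝ := fun s => V s / s ^ (m+1) - 4 * X s / s ^ (m+3) +
      X r * (4 / s ^ (m+3) - 2 / (((m+1:ℕ):ℝ) * s ^ (m+1))) with hFdef
  have key : ∀ s, 0 < s → HasDerivAt F
      ((X s - X r) * (2 * (2 * (((m+1:ℕ):ℝ) + 2) - s ^ 2) / s ^ (m+4))) s := by
    intro s hs
    have hsne : s ≠ 0 := hs.ne'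
    have hpn : s ^ (m+1) ≠ 0 := pow_ne_zero _ hsne
    have hpn2 : s ^ (m+3) ≠ 0 := pow_ne_zero _ hsne
    have hVd := (hV s hs).hasDerivAt
    have hXd := (hX s hs).hasDerivAt
    have h1 : HasDerivAt (fun s => V s / s ^ (m+1))
        ((deriv V s * s ^ (m+1) - V s * (((m+1:ℕ):ℝ) * s ^ m)) / (s ^ (m+1)) ^ 2) s := by
      simpa using hVd.fun_div (hasDerivAt_pow (m+1) s) hpn
    have h2 : HasDerivAt (fun s => 4 * X s / s ^ (m+3))
        ((4 * deriv X s * s ^ (m+3) - 4 * X s * (((m+3:ℕ):ℝ) * s ^ (m+2))) / (s ^ (m+3)) ^ 2) s := by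
      simpa using (hXd.const_mul 4).fun_div (hasDerivAt_pow (m+3) s) hpn2
    have h3 : HasDerivAt (fun s : ℝ => 4 / s ^ (m+3))
        ((0 * s ^ (m+3) - 4 * (((m+3:ℕ):ℝ) * s ^ (m+2))) / (s ^ (m+3)) ^ 2) s := by
      simpa using (hasDerivAt_const s (4:ℝ)).fun_div (hasDerivAt_pow (m+3) s) hpn2
    have h4 : HasDerivAt (fun s : ℝ => 2 / (((m+1:ℕ):ℝ) * s ^ (m+1)))
        ((0 * (((m+1:ℕ):ℝ) * s ^ (m+1)) - 2 * (((m+1:ℕ):ℝ) * (((m+1:ℕ):ℝ) * s ^ m))) /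
          (((m+1:ℕ):ℝ) * s ^ (m+1)) ^ 2) s := by
      have := (hasDerivAt_const s (2:ℝ)).fun_div ((hasDerivAt_pow (m+1) s).const_mul (((m+1:ℕ):ℝ)))
        (by positivity)
      simpa using this
    have hcomb := (h1.sub h2).add ((h3.sub h4).const_mul (X r))
    have hVderiv : deriv V s = ((((m+1:ℕ):ℝ)) * V s - 2 * X s + 4 / s * deriv X s) / s := by
      have h := hid s hs
      field_simp at h ⊢
      linarith
    refine hcomb.congr_deriv (Eq.symm ?_)
    rw [hVderiv]
    have hm1 : (((m+1:ℕ):ℝ)) ≠ 0 := by positivity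
    field_simp
    push_cast
    ring
  have hanti : AntitoneOn F (Set.Ici r) := by
    apply antitoneOn_of_deriv_nonpos (convex_Ici r)
    · intro x hx
      exact ((key x (hr0.trans_le hx)).continuousAt).continuousWithinAt
    · intro x hx
      rw [interior_Ici] at hx
      exact ((key x (hr0.trans hx)).differentiableAt).differentiableWithinAt
    · intro x hx
      rw [interior_Ici] at hx
      have hx0 : 0 < x := hr0.trans hx
      rw [(key x hx0).deriv]
      apply mul_nonpos_of_nonneg_of_nonpos
      · have := hXmono (Set.mem_Ioi.mpr hr0) (Set.mem_Ioi.mpr hx0) hx.le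
        linarith
      · apply div_nonpos_of_nonpos_of_nonneg
        · have hx2 : r ^ 2 ≤ x ^ 2 := by nlinarith [Set.mem_Ioi.mp hx]
          linarith
        · positivity
  have hclim : Tendsto (fun s : ℝ => X r * (4 / s ^ (m+3) - 2 / (((m+1:ℕ):ℝ) * s ^ (m+1))))
      atTop (nhds 0) := by
    have t1 : Tendsto (fun s : ℝ => 4 / s ^ (m+3)) atTop (nhds 0) :=
      tendsto_const_nhds.div_atTop (tendsto_pow_atTop (by omega))
    have t2 : Tendsto (fun s : ℝ => 2 / (((m+1:ℕ):ℝ) * s ^ (m+1))) atTop (nhds 0) := by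
      apply tendsto_const_nhds.div_atTop
      exact (tendsto_pow_atTop (by omega)).const_mul_atTop (by positivity)
    have := ((t1.sub t2).const_mul (X r))
    simpa using this
  have hFlim : Tendsto F atTop (nhds L) := by
    have h := hP.add hclim
    rw [add_zero] at h
    exact h.congr fun s => rfl
  have hLe : L ≤ F r := by
    apply le_of_tendsto hFlim
    filter_upwards [eventually_ge_atTop r] with s hs
    exact hanti Set.self_mem_Ici hs hs
  have first : L - (V r / r ^ (m+1) - 4 * X r / r ^ ((m+1) + 2)) ≤
      X r * (4 / r ^ ((m+1) + 2) - 2 / (((m+1:ℕ):ℝ) * r ^ (m+1))) := by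
    have : F r = V r / r ^ (m+1) - 4 * X r / r ^ (m+3) +
        X r * (4 / r ^ (m+3) - 2 / (((m+1:ℕ):ℝ) * r ^ (m+1))) := rfl
    rw [this] at hLe
    have h33 : (m+1)+2 = m+3 := by omega
    rw [h33]
    linarith
  refine ⟨first, ?_⟩
  have hrpow : (0:ℝ) < r ^ (m+1) := pow_pos hr0 _
  have hrpow2 : (0:ℝ) < r ^ ((m+1)+2) := pow_pos hr0 _
  have e1 : X r * (4 / r ^ ((m+1)+2) - 2 / (((m+1:ℕ):ℝ) * r ^ (m+1))) =
      4 * X r / r ^ ((m+1)+2) - X r * (2 / (((m+1:ℕ):ℝ) * r ^ (m+1))) := by ring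
  have key2 : X r * (2 / (((m+1:ℕ):ℝ) * r ^ (m+1))) ≤ V r / r ^ (m+1) - L := by
    rw [e1] at first; linarith
  calc X r / r ^ (m+1)
      = (((m+1:ℕ):ℝ) / 2) * (X r * (2 / (((m+1:ℕ):ℝ) * r ^ (m+1)))) := by
        have hm1 : (((m+1:ℕ):ℝ)) ≠ 0 := by positivity
        field_simp
    _ ≤ (((m+1:ℕ):ℝ) / 2) * (V r / r ^ (m+1) - L) := by
        apply mul_le_mul_of_nonneg_left key2 (by positivity)
end

section
/- Let n ≥ 1 be a natural number and let V, X : ℝ → ℝ be differentiable on (0,∞) and satisfy n·V(r) − r·V′(r) = 2·X(r) − (4/r)·X′(r) for every r > 0. Assume X(r) ≥ 0 for all r > 0 and that P(r) = V(r)/r^n − 4·X(r)/r^{n+2} converges to a real number L as r → ∞. Then for every r ≥ √(2(n+2)) one has P(r) ≥ L, and hence V(r) ≥ L·r^n. -/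
open Filter

/-- Under Cao–Zhou's identity, `X ≥ 0` on `(0,∞)` and
`P(r) = V(r)/r^n − 4X(r)/r^{n+2} → L` as `r → ∞`, for every `r ≥ √(2(n+2))` one has
`P(r) ≥ L` and hence `V(r) ≥ L·r^n`. -/
theorem shrinker_volume_lower (n : ℕ) (hn : 1 ≤ n) (V X : ℝ → ℝ)
    (hV : ∀ r > (0 : ℝ), DifferentiableAt ℝ V r)
    (hX : ∀ r > (0 : ℝ), DifferentiableAt ℝ X r)
    (hid : ∀ r > (0 : ℝ),
      (n : ℝ) * V r - r * deriv V r = 2 * X r - (4 / r) * deriv X r)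
    (hX0 : ∀ r > (0 : ℝ), 0 ≤ X r)
    (L : ℝ)
    (hP : Tendsto (fun s => V s / s ^ n - 4 * X s / s ^ (n + 2)) atTop (nhds L)) :
    ∀ r, Real.sqrt (2 * ((n : ℝ) + 2)) ≤ r →
      L ≤ V r / r ^ n - 4 * X r / r ^ (n + 2) ∧ L * r ^ n ≤ V r := by
  obtain ⟨m, rfl⟩ : ∃ m, n = m + 1 := ⟨n - 1, (Nat.succ_pred_eq_of_pos hn).symm⟩
  set n := m + 1 with hn'
  set r0 := Real.sqrt (2 * ((n : ℝ) + 2)) with hr0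
  have hr0pos : 0 < r0 := Real.sqrt_pos.mpr (by positivity)
  set P : ℝ → ℝ := fun s => V s / s ^ n - 4 * X s / s ^ (n + 2) with hPdef
  have hderiv : ∀ x > (0:ℝ), HasDerivAt P
      ((deriv V x * x ^ n - V x * ((n : ℝ) * x ^ m)) / (x ^ n) ^ 2
       - ((4 * deriv X x) * x ^ (n+2) - (4 * X x) * (((n:ℝ)+2) * x ^ (n+1))) / (x ^ (n+2)) ^ 2) x := by
    intro x hx
    have h1 : HasDerivAt (fun s => V s / s ^ n)
        ((deriv V x * x ^ n - V x * ((n : ℝ) * x ^ m)) / (x ^ n) ^ 2) x :=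
      ((hV x hx).hasDerivAt).div (hasDerivAt_pow n x) (by positivity)
    have h2 : HasDerivAt (fun s => 4 * X s / s ^ (n+2))
        (((4 * deriv X x) * x ^ (n+2) - (4 * X x) * (((n:ℝ)+2) * x ^ (n+1))) / (x ^ (n+2)) ^ 2) x := by
      have := (((hX x hx).hasDerivAt).const_mul 4).div (hasDerivAt_pow (n+2) x) (by positivity)
      have this : HasDerivAt (fun s => 4 * X s / s ^ (n+2)) _ x := this
      convert this using 2
      push_cast
      ring
    exact h1.sub h2
  have hnonpos : ∀ x, r0 < x → deriv P x ≤ 0 := by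
    intro x hxr
    have hx : 0 < x := hr0pos.trans hxr
    have hx2 : 2 * ((n : ℝ) + 2) ≤ x ^ 2 := by
      have : r0 ^ 2 ≤ x ^ 2 := pow_le_pow_left₀ hr0pos.le hxr.le 2
      rwa [hr0, Real.sq_sqrt (by positivity)] at this
    rw [(hderiv x hx).deriv]
    have hid' := hid x hx
    have heq : (deriv V x * x ^ n - V x * ((n : ℝ) * x ^ m)) / (x ^ n) ^ 2
       - ((4 * deriv X x) * x ^ (n+2) - (4 * X x) * (((n:ℝ)+2) * x ^ (n+1))) / (x ^ (n+2)) ^ 2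
       = 2 * X x * (2 * ((n:ℝ) + 2) - x ^ 2) / x ^ (n + 3) := by
      have hxn : x ^ 2 * deriv V x = (n : ℝ) * V x * x - 2 * X x * x + 4 * deriv X x := by
        field_simp at hid'
        nlinarith [hid']
      rw [hn'] at hxn ⊢
      push_cast at hxn ⊢
      field_simp
      linear_combination (x ^ 9 * x ^ (m * 4)) * hxn
    rw [heq]
    apply div_nonpos_of_nonpos_of_nonneg
    · have := hX0 x hx
      nlinarith
    · positivity
  have hmono : AntitoneOn P (Set.Ici r0) := by
    apply antitoneOn_of_deriv_nonpos (convex_Ici r0)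
    · intro x hx
      exact ((hderiv x (hr0pos.trans_le hx)).differentiableAt).continuousAt.continuousWithinAt
    · intro x hx
      rw [interior_Ici] at hx
      exact ((hderiv x (hr0pos.trans hx)).differentiableAt).differentiableWithinAt
    · intro x hx
      rw [interior_Ici] at hx
      exact hnonpos x hx
  intro r hr
  have hrpos : 0 < r := hr0pos.trans_le hr
  have hL : L ≤ P r := by
    refine le_of_tendsto hP ?_
    filter_upwards [eventually_ge_atTop r] with s hs
    exact hmono hr (hr.trans hs) hs
  refine ⟨hL, ?_⟩
  have h2 : L ≤ V r / r ^ n := by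
    have : 0 ≤ 4 * X r / r ^ (n + 2) := by
      have := hX0 r hrpos
      positivity
    calc L ≤ P r := hL
    _ ≤ V r / r ^ n := by simp only [hPdef]; linarith
  calc L * r ^ n ≤ (V r / r ^ n) * r ^ n := by
        exact mul_le_mul_of_nonneg_right h2 (by positivity)
  _ = V r := by field_simp
end

section
/- Let n ≥ 1 be a natural number and let V, X : ℝ → ℝ be differentiable on (0,∞) and satisfy n·V(r) − r·V′(r) = 2·X(r) − (4/r)·X′(r) for every r > 0. Assume 0 ≤ X(r) ≤ (n/2)·V(r) for all r > 0, X is non-decreasing on (0,∞), and V(r)/r^n converges to a positive real number ℓ as r → ∞. Then X(r)/V(r) → 0 as r → ∞. -/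
open Filter

/-- Key quantitative inequality: for `s ≥ 2n+4`,
`X s / s^n ≤ 2n (P s - P (2s))` where `P r = V r / r^n - 4 X r / r^(n+2)`. -/
lemma shrinker_key_ineq (n : ℕ) (hn : 1 ≤ n) (V X : ℝ → ℝ)
    (hV : ∀ r > (0 : ℝ), DifferentiableAt ℝ V r)
    (hX : ∀ r > (0 : ℝ), DifferentiableAt ℝ X r)
    (hid : ∀ r > (0 : ℝ),
      (n : ℝ) * V r - r * deriv V r = 2 * X r - (4 / r) * deriv X r)
    (hX0 : ∀ r > (0 : ℝ), 0 ≤ X r)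
    (hXmono : MonotoneOn X (Set.Ioi 0))
    (s : ℝ) (hs : 2 * (n : ℝ) + 4 ≤ s) :
    X s / s ^ n ≤ 2 * (n : ℝ) *
      ((V s / s ^ n - 4 * X s / s ^ (n + 2))
        - (V (2 * s) / (2 * s) ^ n - 4 * X (2 * s) / (2 * s) ^ (n + 2))) := by
  obtain ⟨m, rfl⟩ : ∃ m, n = m + 1 := ⟨n - 1, (Nat.succ_pred_eq_of_pos hn).symm⟩
  have hm : ((m : ℝ) + 1) ≠ 0 := by positivity
  have hs0 : (0 : ℝ) < s := by
    have : (0:ℝ) ≤ (m : ℝ) := Nat.cast_nonneg m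
    push_cast at hs; linarith
  set W : ℝ → ℝ := fun r =>
    V r / r ^ (m + 1) - 4 * X r / r ^ (m + 3) - X s / (((m : ℝ) + 1) * r ^ (m + 1))
    with hWdef
  -- derivative of W at positive points
  have hWd : ∀ x : ℝ, 0 < x → HasDerivAt W
      ((deriv V x * x ^ (m + 1) - V x * ((↑(m + 1) : ℝ) * x ^ m)) / (x ^ (m + 1)) ^ 2
        - (4 * deriv X x * x ^ (m + 3) - 4 * X x * ((↑(m + 3) : ℝ) * x ^ (m + 2)))
            / (x ^ (m + 3)) ^ 2
        - (0 * (((m : ℝ) + 1) * x ^ (m + 1))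
            - X s * (((m : ℝ) + 1) * ((↑(m + 1) : ℝ) * x ^ m)))
            / ((((m : ℝ) + 1)) * x ^ (m + 1)) ^ 2) x := by
    intro x hx0
    have hxn : x ^ (m + 1) ≠ 0 := pow_ne_zero _ hx0.ne'
    have hxn2 : x ^ (m + 3) ≠ 0 := pow_ne_zero _ hx0.ne'
    have h1 : HasDerivAt (fun t => V t / t ^ (m + 1))
        ((deriv V x * x ^ (m + 1) - V x * ((↑(m + 1) : ℝ) * x ^ m)) / (x ^ (m + 1)) ^ 2) x := by
      have := ((hV x hx0).hasDerivAt).div (hasDerivAt_pow (m + 1) x) hxn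
      simp at this ⊢; exact this
    have h2 : HasDerivAt (fun t => 4 * X t / t ^ (m + 3))
        ((4 * deriv X x * x ^ (m + 3) - 4 * X x * ((↑(m + 3) : ℝ) * x ^ (m + 2)))
          / (x ^ (m + 3)) ^ 2) x := by
      have := (((hX x hx0).hasDerivAt).const_mul (4 : ℝ)).div (hasDerivAt_pow (m + 3) x) hxn2
      simp at this ⊢; exact this
    have h3 : HasDerivAt (fun t => X s / (((m : ℝ) + 1) * t ^ (m + 1)))
        ((0 * (((m : ℝ) + 1) * x ^ (m + 1))
          - X s * (((m : ℝ) + 1) * ((↑(m + 1) : ℝ) * x ^ m)))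
          / ((((m : ℝ) + 1)) * x ^ (m + 1)) ^ 2) x := by
      have hden : ((m : ℝ) + 1) * x ^ (m + 1) ≠ 0 := mul_ne_zero hm hxn
      have := (hasDerivAt_const x (X s)).div
        ((hasDerivAt_pow (m + 1) x).const_mul ((m : ℝ) + 1)) hden
      simp at this ⊢; exact this
    exact (h1.sub h2).sub h3
  -- W is antitone on [s, 2s]
  have h2s : s ≤ 2 * s := by linarith
  have hanti : AntitoneOn W (Set.Icc s (2 * s)) := by
    apply antitoneOn_of_deriv_nonpos (convex_Icc _ _)
    · intro x hx
      have hx0 : 0 < x := lt_of_lt_of_le hs0 hx.1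
      exact (hWd x hx0).differentiableAt.continuousAt.continuousWithinAt
    · rw [interior_Icc]
      intro x hx
      have hx0 : 0 < x := lt_of_lt_of_le hs0 hx.1.le
      exact ((hWd x hx0).differentiableAt).differentiableWithinAt
    · rw [interior_Icc]
      intro x hx
      have hx0 : 0 < x := lt_of_lt_of_le hs0 hx.1.le
      rw [(hWd x hx0).deriv]
      have hxn : x ^ (m + 1) ≠ 0 := pow_ne_zero _ hx0.ne'
      have hxn2 : x ^ (m + 3) ≠ 0 := pow_ne_zero _ hx0.ne'
      -- rewrite as a single fraction
      have hEq : (deriv V x * x ^ (m + 1) - V x * ((↑(m + 1) : ℝ) * x ^ m)) / (x ^ (m + 1)) ^ 2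
          - (4 * deriv X x * x ^ (m + 3) - 4 * X x * ((↑(m + 3) : ℝ) * x ^ (m + 2)))
              / (x ^ (m + 3)) ^ 2
          - (0 * (((m : ℝ) + 1) * x ^ (m + 1))
              - X s * (((m : ℝ) + 1) * ((↑(m + 1) : ℝ) * x ^ m)))
              / ((((m : ℝ) + 1)) * x ^ (m + 1)) ^ 2
          = (((m : ℝ) + 1) ^ 2 * x ^ (m + 2) *
              (x ^ 3 * deriv V x - ((m : ℝ) + 1) * x ^ 2 * V x - 4 * x * deriv X x
                + 4 * ((m : ℝ) + 3) * X x + X s * x ^ 2))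
            / (((m : ℝ) + 1) ^ 2 * x ^ (2 * m + 6)) := by
        push_cast
        field_simp
        ring
      rw [hEq]
      apply div_nonpos_of_nonpos_of_nonneg _ (by positivity)
      apply mul_nonpos_of_nonneg_of_nonpos (by positivity)
      -- the identity, cleared of denominators
      have hid2 : ((m : ℝ) + 1) * V x * x ^ 2 - deriv V x * x ^ 3
          = 2 * X x * x ^ 2 - 4 * deriv X x * x := by
        have h := hid x hx0
        push_cast at h
        have hx' : x ≠ 0 := hx0.ne'
        field_simp at h
        nlinarith [h, sq_nonneg x]
      have hXs : X s ≤ X x := hXmono (Set.mem_Ioi.mpr hs0) (Set.mem_Ioi.mpr hx0)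
        (le_of_lt hx.1)
      have hXx0 : 0 ≤ X x := hX0 x hx0
      have hxbig : 2 * (m : ℝ) + 6 ≤ x := by
        have := hx.1
        push_cast at hs
        linarith
      have hm0 : (0:ℝ) ≤ (m : ℝ) := Nat.cast_nonneg m
      have hsq : 4 * ((m : ℝ) + 3) ≤ x ^ 2 := by nlinarith
      nlinarith [hid2, mul_nonneg (sub_nonneg.2 hXs) (sq_nonneg x),
        mul_nonneg hXx0 (sub_nonneg.2 hsq)]
  -- apply antitonicity between s and 2s
  have hWle : W (2 * s) ≤ W s :=
    hanti (Set.mem_Icc.mpr ⟨le_refl s, h2s⟩) (Set.mem_Icc.mpr ⟨h2s, le_refl _⟩) h2s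
  -- unfold and conclude
  have hXs0 : 0 ≤ X s := hX0 s hs0
  have hsn : (0:ℝ) < s ^ (m + 1) := pow_pos hs0 _
  have hc2 : (2:ℝ) ≤ 2 ^ (m + 1) := by
    calc (2:ℝ) = 2 ^ 1 := (pow_one 2).symm
    _ ≤ 2 ^ (m + 1) := pow_le_pow_right₀ (by norm_num) (Nat.le_add_left 1 m)
  simp only [hWdef] at hWle
  -- let a := X s, b := s^(m+1), c := 2^(m+1), N := m+1
  have key : X s / s ^ (m + 1) ≤ 2 * ((m : ℝ) + 1) *
      ((V s / s ^ (m + 1) - 4 * X s / s ^ (m + 3))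
        - (V (2 * s) / (2 * s) ^ (m + 1) - 4 * X (2 * s) / (2 * s) ^ (m + 3))) := by
    have hmul : (2 * s) ^ (m + 1) = 2 ^ (m + 1) * s ^ (m + 1) := mul_pow 2 s (m + 1)
    have hP : X s / (((m : ℝ) + 1) * s ^ (m + 1))
        - X s / (((m : ℝ) + 1) * (2 ^ (m + 1) * s ^ (m + 1)))
        ≤ (V s / s ^ (m + 1) - 4 * X s / s ^ (m + 3))
          - (V (2 * s) / (2 * s) ^ (m + 1) - 4 * X (2 * s) / (2 * s) ^ (m + 3)) := by
      rw [hmul] at hWle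
      rw [hmul]
      linarith [hWle]
    have hcpos : (0:ℝ) < 2 ^ (m + 1) := by positivity
    have h1 : X s / s ^ (m + 1) ≤ 2 * ((m : ℝ) + 1) *
        (X s / (((m : ℝ) + 1) * s ^ (m + 1))
          - X s / (((m : ℝ) + 1) * (2 ^ (m + 1) * s ^ (m + 1)))) := by
      have hq : 2 * ((m : ℝ) + 1) *
          (X s / (((m : ℝ) + 1) * s ^ (m + 1))
            - X s / (((m : ℝ) + 1) * (2 ^ (m + 1) * s ^ (m + 1))))
          = 2 * (X s / s ^ (m + 1)) - 2 * X s / (2 ^ (m + 1) * s ^ (m + 1)) := by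
        field_simp
      rw [hq]
      have h2 : 2 * X s / (2 ^ (m + 1) * s ^ (m + 1)) ≤ X s / s ^ (m + 1) := by
        rw [div_le_div_iff₀ (by positivity) hsn]
        have : 2 * s ^ (m + 1) ≤ 2 ^ (m + 1) * s ^ (m + 1) :=
          mul_le_mul_of_nonneg_right hc2 hsn.le
        nlinarith
      linarith
    calc X s / s ^ (m + 1) ≤ 2 * ((m : ℝ) + 1) *
        (X s / (((m : ℝ) + 1) * s ^ (m + 1))
          - X s / (((m : ℝ) + 1) * (2 ^ (m + 1) * s ^ (m + 1)))) := h1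
      _ ≤ _ := by
        apply mul_le_mul_of_nonneg_left hP (by positivity)
  push_cast
  push_cast at key
  convert key using 2 <;> norm_num

/-- Under Cao–Zhou's identity, `0 ≤ X ≤ (n/2)·V` on `(0,∞)`,
`X` non-decreasing on `(0,∞)`, and `V(r)/r^n → ℓ > 0`, one has `X(r)/V(r) → 0`. -/
theorem shrinker_average_scalar_to_zero (n : ℕ) (hn : 1 ≤ n) (V X : ℝ → ℝ)
    (hV : ∀ r > (0 : ℝ), DifferentiableAt ℝ V r)
    (hX : ∀ r > (0 : ℝ), DifferentiableAt ℝ X r)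
    (hid : ∀ r > (0 : ℝ),
      (n : ℝ) * V r - r * deriv V r = 2 * X r - (4 / r) * deriv X r)
    (hX0 : ∀ r > (0 : ℝ), 0 ≤ X r)
    (hXV : ∀ r > (0 : ℝ), X r ≤ ((n : ℝ) / 2) * V r)
    (hXmono : MonotoneOn X (Set.Ioi 0))
    (ℓ : ℝ) (hℓ : 0 < ℓ)
    (hVlim : Tendsto (fun r => V r / r ^ n) atTop (nhds ℓ)) :
    Tendsto (fun r => X r / V r) atTop (nhds 0) := by
  set P : ℝ → ℝ := fun r => V r / r ^ n - 4 * X r / r ^ (n + 2) with hPdef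
  -- the secondary term tends to 0
  have hsec : Tendsto (fun r : ℝ => 4 * X r / r ^ (n + 2)) atTop (nhds 0) := by
    have hub : Tendsto (fun r : ℝ => (2 * (n : ℝ) / r ^ 2) * (V r / r ^ n)) atTop
        (nhds (0 * ℓ)) := by
      apply Tendsto.mul _ hVlim
      exact tendsto_const_nhds.div_atTop (tendsto_pow_atTop two_ne_zero)
    rw [zero_mul] at hub
    apply squeeze_zero' _ _ hub
    · filter_upwards [eventually_gt_atTop (0:ℝ)] with r hr
      exact div_nonneg (by nlinarith [hX0 r hr]) (by positivity)
    · filter_upwards [eventually_gt_atTop (0:ℝ)] with r hr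
      have h1 : 4 * X r ≤ 2 * (n : ℝ) * V r := by nlinarith [hXV r hr]
      have h2 : (2 * (n : ℝ) / r ^ 2) * (V r / r ^ n) = 2 * (n : ℝ) * V r / r ^ (n + 2) := by
        rw [div_mul_div_comm, ← pow_add, add_comm 2 n]
      rw [h2]
      exact div_le_div_of_nonneg_right h1 (by positivity) |>.trans_eq rfl
  have hP : Tendsto P atTop (nhds ℓ) := by
    have := hVlim.sub hsec
    simpa using this
  have h2top : Tendsto (fun s : ℝ => 2 * s) atTop atTop :=
    Tendsto.const_mul_atTop two_pos tendsto_id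
  have hP2 : Tendsto (fun s : ℝ => P (2 * s)) atTop (nhds ℓ) := hP.comp h2top
  -- X s / s^n → 0
  have hXn : Tendsto (fun s : ℝ => X s / s ^ n) atTop (nhds 0) := by
    have hub : Tendsto (fun s : ℝ => 2 * (n : ℝ) * (P s - P (2 * s))) atTop
        (nhds (2 * (n : ℝ) * (ℓ - ℓ))) := Tendsto.const_mul _ (hP.sub hP2)
    rw [sub_self, mul_zero] at hub
    apply squeeze_zero' _ _ hub
    · filter_upwards [eventually_gt_atTop (0:ℝ)] with s hs
      exact div_nonneg (hX0 s hs) (by positivity)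
    · filter_upwards [eventually_ge_atTop (2 * (n : ℝ) + 4)] with s hs
      exact shrinker_key_ineq n hn V X hV hX hid hX0 hXmono s hs
  -- conclude
  have hdiv : Tendsto (fun s : ℝ => (X s / s ^ n) / (V s / s ^ n)) atTop (nhds (0 / ℓ)) :=
    hXn.div hVlim hℓ.ne'
  rw [zero_div] at hdiv
  apply hdiv.congr'
  filter_upwards [eventually_gt_atTop (0:ℝ)] with s hs
  rcases eq_or_ne (V s) 0 with h | h
  · simp [h]
  · have hsn : s ^ n ≠ 0 := pow_ne_zero _ hs.ne'
    field_simp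
end

section
/- Let n ≥ 1 be a natural number, let ω_n = π^{n/2}/Γ(n/2 + 1) denote the volume of the unit ball in ℝ^n, let (M, μ) be a measure space, and let ρ : M → [0,∞) be measurable with μ({x : ρ(x) < r}) < ∞ for every r > 0. If μ({x : ρ(x) < r})/r^n converges to A·ω_n as r → ∞ for some real A ≥ 0, then lim_{τ→∞} ∫_M (4πτ)^{−n/2} · e^{−ρ(x)²/(4τ)} dμ(x) = A. -/
open Real MeasureTheory Filter

open Set

lemma exp_neg_image : (fun u : ℝ => Real.exp (-u)) '' (Set.Ioi 0) = Set.Ioo 0 1 := by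
  ext y
  constructor
  · rintro ⟨u, hu, rfl⟩
    exact ⟨Real.exp_pos _, by simpa using Real.exp_lt_one_iff.mpr (neg_neg_iff_pos.mpr hu)⟩
  · rintro ⟨h0, h1⟩
    exact ⟨-Real.log y, by simpa using Real.log_neg h0 h1, by simp [Real.exp_log h0]⟩

lemma exp_neg_deriv (u : ℝ) (s : Set ℝ) :
    HasDerivWithinAt (fun u : ℝ => Real.exp (-u)) (-Real.exp (-u)) s u := by
  simpa [Function.comp_def] using ((Real.hasDerivAt_exp (-u)).comp u ((hasDerivAt_id u).neg)).hasDerivWithinAt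

lemma exp_neg_injOn : Set.InjOn (fun u : ℝ => Real.exp (-u)) (Set.Ioi 0) := by
  intro a _ b _ h
  simpa using Real.exp_injective h

lemma neg_log_eq (s : ℝ) (g : ℝ → ℝ) (hg : g = fun t => (-Real.log t) ^ s) :
    ∀ x ∈ Set.Ioi (0:ℝ), |(-Real.exp (-x))| • g (Real.exp (-x)) = Real.exp (-x) * x ^ s := by
  intro x hx
  simp [hg, abs_of_pos (Real.exp_pos _), Real.log_exp]

lemma neg_log_integral (s : ℝ) (hs : 0 < s) :
    ∫ t in Set.Ioo (0:ℝ) 1, (-Real.log t) ^ s = Real.Gamma (s + 1) := by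
  rw [← exp_neg_image,
    integral_image_eq_integral_abs_deriv_smul measurableSet_Ioi
      (fun x _ => exp_neg_deriv x _) exp_neg_injOn]
  rw [Real.Gamma_eq_integral (by linarith)]
  refine setIntegral_congr_fun measurableSet_Ioi fun x hx => ?_
  simp [abs_of_pos (Real.exp_pos _), Real.log_exp]

lemma neg_log_integrable (s : ℝ) (hs : 0 < s) :
    IntegrableOn (fun t => (-Real.log t) ^ s) (Set.Ioo (0:ℝ) 1) := by
  rw [← exp_neg_image,
    integrableOn_image_iff_integrableOn_abs_deriv_smul measurableSet_Ioi
      (fun x _ => exp_neg_deriv x _) exp_neg_injOn]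
  have := Real.GammaIntegral_convergent (s := s + 1) (by linarith)
  simp only [add_sub_cancel_right] at this
  refine this.congr_fun (fun x hx => ?_) measurableSet_Ioi
  simp [abs_of_pos (Real.exp_pos _), Real.log_exp]

lemma key_rpow (n : ℕ) {τ L : ℝ} (hτ : 0 < τ) (hL : 0 < L) :
    (4 * π * τ) ^ (-(n:ℝ)/2) * (Real.sqrt (4*τ*L)) ^ n
      = π ^ (-(n:ℝ)/2) * L ^ ((n:ℝ)/2) := by
  have h4τL : (0:ℝ) ≤ 4*τ*L := by positivity
  have hsq : (Real.sqrt (4*τ*L)) ^ n = (4*τ*L) ^ ((n:ℝ)/2) := by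
    rw [Real.sqrt_eq_rpow, ← Real.rpow_natCast ((4*τ*L) ^ ((1:ℝ)/2)) n,
      ← Real.rpow_mul h4τL]
    ring_nf
  rw [hsq, neg_div, Real.rpow_neg (by positivity), Real.rpow_neg pi_pos.le,
    inv_mul_eq_div, inv_mul_eq_div, div_eq_div_iff (by positivity) (by positivity),
    ← Real.mul_rpow h4τL pi_pos.le, ← Real.mul_rpow hL.le (by positivity)]
  congr 1
  ring

/-- If `μ({ρ < r})/r^n → A·ω_n` as `r → ∞`, where
`ω_n = π^{n/2}/Γ(n/2+1)` is the volume of the unit Euclidean `n`-ball, then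
`∫_M (4πτ)^{−n/2} e^{−ρ²/(4τ)} dμ → A` as `τ → ∞`. -/
theorem gaussian_integral_tendsto_avr (n : ℕ) (hn : 1 ≤ n)
    {M : Type*} [MeasurableSpace M] (μ : Measure M)
    (ρ : M → ℝ) (hρ : Measurable ρ) (hρ0 : ∀ x, 0 ≤ ρ x)
    (hfin : ∀ r > (0 : ℝ), μ {x | ρ x < r} < ⊤)
    (A : ℝ) (hA : 0 ≤ A)
    (hlim : Tendsto (fun r : ℝ => (μ {x | ρ x < r}).toReal / r ^ n) atTop
      (nhds (A * (Real.pi ^ ((n : ℝ) / 2) / Real.Gamma ((n : ℝ) / 2 + 1))))) :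
    Tendsto (fun τ : ℝ =>
        ∫ x, (4 * Real.pi * τ) ^ (-(n : ℝ) / 2) * Real.exp (-(ρ x) ^ 2 / (4 * τ)) ∂μ)
      atTop (nhds A) := by
  have hs : (0:ℝ) < (n:ℝ)/2 := by
    have : (1:ℝ) ≤ (n:ℝ) := by exact_mod_cast hn
    linarith
  set ωn : ℝ := Real.pi ^ ((n : ℝ) / 2) / Real.Gamma ((n : ℝ) / 2 + 1) with hωn_def
  have hΓpos : 0 < Real.Gamma ((n:ℝ)/2 + 1) := Real.Gamma_pos_of_pos (by linarith)
  have hωn_pos : 0 < ωn := div_pos (Real.rpow_pos_of_pos pi_pos _) hΓpos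
  -- the cumulative volume function
  set V : ℝ → ℝ := fun r => (μ {x | ρ x < r}).toReal with hV_def
  have hfin' : ∀ r : ℝ, μ {x | ρ x < r} < ⊤ := by
    intro r
    rcases le_or_gt r 0 with h | h
    · have : {x | ρ x < r} = ∅ := by
        ext x; simp only [mem_setOf_eq, mem_empty_iff_false, iff_false, not_lt]
        exact h.trans (hρ0 x)
      simp [this]
    · exact hfin r h
  have hVmono : Monotone V := by
    intro a b hab
    exact ENNReal.toReal_mono (hfin' b).ne (measure_mono fun x hx => lt_of_lt_of_le hx hab)
  have hVmeas : Measurable V := hVmono.measurable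
  have hV0 : ∀ r, 0 ≤ V r := fun r => ENNReal.toReal_nonneg
  -- measurability of the radius map
  have hrmeas : ∀ τ : ℝ, Measurable fun t : ℝ => Real.sqrt (4 * τ * (-Real.log t)) :=
    fun τ => (Real.continuous_sqrt.measurable).comp
      ((measurable_const.mul Real.measurable_log.neg))
  -- Step 1: rewrite the integral
  have step1 : ∀ τ : ℝ, 0 < τ →
      (∫ x, (4 * Real.pi * τ) ^ (-(n : ℝ) / 2) * Real.exp (-(ρ x) ^ 2 / (4 * τ)) ∂μ)
        = ∫ t in Ioo (0:ℝ) 1,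
            (4 * Real.pi * τ) ^ (-(n : ℝ) / 2) * V (Real.sqrt (4 * τ * (-Real.log t))) := by
    intro τ hτ
    have hexp_meas : Measurable fun x => Real.exp (-(ρ x) ^ 2 / (4 * τ)) :=
      Real.measurable_exp.comp (((hρ.pow_const 2).neg).div_const _)
    rw [MeasureTheory.integral_const_mul]
    rw [MeasureTheory.integral_eq_lintegral_of_nonneg_ae
      (ae_of_all _ fun x => (Real.exp_pos _).le) hexp_meas.aestronglyMeasurable]
    rw [MeasureTheory.lintegral_eq_lintegral_meas_lt μ
      (ae_of_all _ fun x => (Real.exp_pos _).le) hexp_meas.aemeasurable]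
    have hsplit : (Ioi (0:ℝ)) = Ioo (0:ℝ) 1 ∪ Ici (1:ℝ) :=
      (Set.Ioo_union_Ici_eq_Ioi (by norm_num)).symm
    have hdisj : Disjoint (Ioo (0:ℝ) 1) (Ici (1:ℝ)) := by
      refine Set.disjoint_left.mpr fun t ht ht' => ?_
      exact absurd ht.2 (not_lt.mpr ht'.out)
    rw [hsplit, lintegral_union measurableSet_Ici hdisj]
    have hzero : ∫⁻ t in Ici (1:ℝ), μ {x | t < Real.exp (-(ρ x) ^ 2 / (4 * τ))} = 0 := by
      rw [setLIntegral_congr_fun measurableSet_Ici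
        (fun ⦃t⦄ (ht : (1:ℝ) ≤ t) => ?_)]
      · exact lintegral_zero
      · have : {x | t < Real.exp (-(ρ x) ^ 2 / (4 * τ))} = ∅ := by
          ext x
          simp only [mem_setOf_eq, mem_empty_iff_false, iff_false, not_lt]
          refine le_trans (Real.exp_le_one_iff.mpr ?_) ht
          rw [neg_div, neg_nonpos]
          positivity
        simp [this]
    rw [hzero, add_zero]
    have hsets : ∀ᵐ t ∂(volume.restrict (Ioo (0:ℝ) 1)),
        μ {x | t < Real.exp (-(ρ x) ^ 2 / (4 * τ))}
          = μ {x | ρ x < Real.sqrt (4 * τ * (-Real.log t))} := by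
      filter_upwards [ae_restrict_mem measurableSet_Ioo] with t ht
      congr 1
      ext x
      simp only [mem_setOf_eq]
      rw [← Real.log_lt_iff_lt_exp ht.1, Real.lt_sqrt (hρ0 x), neg_div, lt_neg,
        div_lt_iff₀ (by linarith : (0:ℝ) < 4 * τ), mul_comm]
    rw [lintegral_congr_ae hsets]
    have hgmeas : AEMeasurable (fun t => μ {x | ρ x < Real.sqrt (4 * τ * (-Real.log t))})
        (volume.restrict (Ioo (0:ℝ) 1)) := by
      have hμmono : Monotone fun r : ℝ => μ {x | ρ x < r} :=
        fun a b hab => measure_mono fun x hx => lt_of_lt_of_le hx hab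
      exact (hμmono.measurable.comp (hrmeas τ)).aemeasurable
    rw [← MeasureTheory.integral_toReal hgmeas (ae_of_all _ fun t => hfin' _)]
    rw [MeasureTheory.integral_const_mul]
  -- a uniform bound on V
  have hAωn : 0 ≤ A * ωn := mul_nonneg hA hωn_pos.le
  have hbnd : ∀ᶠ r in atTop, V r / r ^ n ≤ A * ωn + 1 :=
    hlim.eventually (eventually_le_nhds (lt_add_one (A * ωn)))
  obtain ⟨r₀, hr₀⟩ := eventually_atTop.mp hbnd
  set R : ℝ := max r₀ 1 with hR_def
  have hR1 : (1:ℝ) ≤ R := le_max_right _ _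
  have hVle : ∀ r > (0:ℝ), V r ≤ (A * ωn + 1) * r ^ n + V R := by
    intro r hr
    rcases le_or_gt R r with h | h
    · have hrpow : (0:ℝ) < r ^ n := by positivity
      have h1 : V r / r ^ n ≤ A * ωn + 1 := hr₀ r (le_trans (le_max_left _ _) h)
      have h2 : V r = V r / r ^ n * r ^ n := by field_simp
      nlinarith [hV0 R, mul_le_mul_of_nonneg_right h1 hrpow.le]
    · have h1 : V r ≤ V R := hVmono h.le
      have h2 : 0 ≤ (A * ωn + 1) * r ^ n := by positivity
      linarith
  -- dominated convergence
  have hDCT := MeasureTheory.tendsto_integral_filter_of_dominated_convergence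
    (μ := volume.restrict (Ioo (0:ℝ) 1)) (l := atTop)
    (F := fun (τ : ℝ) (t : ℝ) =>
      (4 * Real.pi * τ) ^ (-(n : ℝ) / 2) * V (Real.sqrt (4 * τ * (-Real.log t))))
    (f := fun t : ℝ =>
      A * ωn * (Real.pi ^ (-(n:ℝ)/2) * (-Real.log t) ^ ((n:ℝ)/2)))
    (bound := fun t : ℝ => (A * ωn + 1) * (Real.pi ^ (-(n:ℝ)/2) * (-Real.log t) ^ ((n:ℝ)/2))
      + (4 * Real.pi) ^ (-(n:ℝ)/2) * V R)
    ?_ ?_ ?_ ?_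
  · -- conclude
    have hfint : (∫ t in Ioo (0:ℝ) 1,
        A * ωn * (Real.pi ^ (-(n:ℝ)/2) * (-Real.log t) ^ ((n:ℝ)/2))) = A := by
      have : ∀ t : ℝ, A * ωn * (Real.pi ^ (-(n:ℝ)/2) * (-Real.log t) ^ ((n:ℝ)/2))
          = (A * ωn * Real.pi ^ (-(n:ℝ)/2)) * (-Real.log t) ^ ((n:ℝ)/2) := fun t => by ring
      simp_rw [this]
      rw [MeasureTheory.integral_const_mul, neg_log_integral _ hs, hωn_def, neg_div,
        Real.rpow_neg pi_pos.le]
      field_simp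
    rw [hfint] at hDCT
    refine hDCT.congr' ?_
    filter_upwards [eventually_gt_atTop 0] with τ hτ
    exact (step1 τ hτ).symm
  · -- measurability
    filter_upwards with τ
    exact (measurable_const.mul (hVmeas.comp (hrmeas τ))).aestronglyMeasurable
  · -- bound
    filter_upwards [eventually_ge_atTop 1] with τ hτ
    filter_upwards [ae_restrict_mem measurableSet_Ioo] with t ht
    have hτ0 : (0:ℝ) < τ := lt_of_lt_of_le one_pos hτ
    have hL : 0 < -Real.log t := neg_pos.mpr (Real.log_neg ht.1 ht.2)
    have hr_pos : 0 < Real.sqrt (4 * τ * (-Real.log t)) :=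
      Real.sqrt_pos.mpr (by positivity)
    have hc_nn : 0 ≤ (4 * Real.pi * τ) ^ (-(n : ℝ) / 2) :=
      Real.rpow_nonneg (by positivity) _
    rw [Real.norm_eq_abs, abs_of_nonneg (mul_nonneg hc_nn (hV0 _))]
    have h1 : (4 * Real.pi * τ) ^ (-(n : ℝ) / 2) * V (Real.sqrt (4 * τ * (-Real.log t)))
        ≤ (4 * Real.pi * τ) ^ (-(n : ℝ) / 2)
          * ((A * ωn + 1) * (Real.sqrt (4 * τ * (-Real.log t))) ^ n + V R) :=
      mul_le_mul_of_nonneg_left (hVle _ hr_pos) hc_nn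
    have h2 : (4 * Real.pi * τ) ^ (-(n : ℝ) / 2)
          * ((A * ωn + 1) * (Real.sqrt (4 * τ * (-Real.log t))) ^ n + V R)
        = (A * ωn + 1)
            * ((4 * Real.pi * τ) ^ (-(n : ℝ) / 2)
              * (Real.sqrt (4 * τ * (-Real.log t))) ^ n)
          + (4 * Real.pi * τ) ^ (-(n : ℝ) / 2) * V R := by ring
    rw [h2, key_rpow n hτ0 hL] at h1
    have h3 : (4 * Real.pi * τ) ^ (-(n : ℝ) / 2) ≤ (4 * Real.pi) ^ (-(n:ℝ)/2) := by
      apply Real.rpow_le_rpow_of_nonpos (by positivity)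
      · nlinarith [pi_pos]
      · rw [neg_div]
        exact neg_nonpos.mpr (by positivity)
    have h4 := mul_le_mul_of_nonneg_right h3 (hV0 R)
    calc (4 * Real.pi * τ) ^ (-(n : ℝ) / 2) * V (Real.sqrt (4 * τ * (-Real.log t)))
        ≤ (A * ωn + 1) * (Real.pi ^ (-(n:ℝ)/2) * (-Real.log t) ^ ((n:ℝ)/2))
          + (4 * Real.pi * τ) ^ (-(n : ℝ) / 2) * V R := h1
      _ ≤ (A * ωn + 1) * (Real.pi ^ (-(n:ℝ)/2) * (-Real.log t) ^ ((n:ℝ)/2))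
          + (4 * Real.pi) ^ (-(n:ℝ)/2) * V R := add_le_add le_rfl h4
  · -- integrability of bound
    apply MeasureTheory.Integrable.add
    · exact ((neg_log_integrable ((n:ℝ)/2) hs).const_mul (Real.pi ^ (-(n:ℝ)/2))).const_mul
        (A * ωn + 1)
    · refine (integrableOn_const ?_)
      simp [Real.volume_Ioo]
  · -- pointwise limit
    filter_upwards [ae_restrict_mem measurableSet_Ioo] with t ht
    have hL : 0 < -Real.log t := neg_pos.mpr (Real.log_neg ht.1 ht.2)
    have hmap : Tendsto (fun τ : ℝ => Real.sqrt (4 * τ * (-Real.log t))) atTop atTop := by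
      have h1 : Tendsto (fun τ : ℝ => 4 * τ * (-Real.log t)) atTop atTop := by
        have := (tendsto_id (α := ℝ)).atTop_mul_const (by positivity : (0:ℝ) < 4 * (-Real.log t))
        exact this.congr fun τ => by simp [id]; ring
      have h2 := (tendsto_rpow_atTop (by norm_num : (0:ℝ) < 1/2)).comp h1
      exact h2.congr fun τ => (Real.sqrt_eq_rpow _).symm
    have h2 : Tendsto (fun τ : ℝ =>
        V (Real.sqrt (4 * τ * (-Real.log t))) / (Real.sqrt (4 * τ * (-Real.log t))) ^ n)
        atTop (nhds (A * ωn)) := hlim.comp hmap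
    have h3 := h2.mul_const (Real.pi ^ (-(n:ℝ)/2) * (-Real.log t) ^ ((n:ℝ)/2))
    refine h3.congr' ?_
    filter_upwards [eventually_gt_atTop 0] with τ hτ
    have hr_pos : 0 < Real.sqrt (4 * τ * (-Real.log t)) := Real.sqrt_pos.mpr (by positivity)
    have hrn : (Real.sqrt (4 * τ * (-Real.log t))) ^ n ≠ 0 := by positivity
    rw [← key_rpow n hτ hL,
      show V (Real.sqrt (4 * τ * (-Real.log t))) / (Real.sqrt (4 * τ * (-Real.log t))) ^ n
        * ((4 * Real.pi * τ) ^ (-(n:ℝ)/2) * (Real.sqrt (4 * τ * (-Real.log t))) ^ n)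
        = (4 * Real.pi * τ) ^ (-(n:ℝ)/2)
          * (V (Real.sqrt (4 * τ * (-Real.log t))) / (Real.sqrt (4 * τ * (-Real.log t))) ^ n
            * (Real.sqrt (4 * τ * (-Real.log t))) ^ n) from by ring,
      div_mul_cancel₀ _ hrn]
end

section
/- Let n ≥ 1 be a natural number and let V, X : ℝ → ℝ be differentiable on (0,∞) and satisfy n·V(r) − r·V′(r) = 2·X(r) − (4/r)·X′(r) for every r > 0. Assume X(s) ≥ 0 for all s > 0, that P(s) = V(s)/s^n − 4·X(s)/s^{n+2} converges to a real number L as s → ∞, and that for some r ≥ √(2(n+2)) and c ≥ 0 one has X(s) ≤ c·s^{n−1/2} for all s ≥ r. Then L ≥ V(r)/r^n − 4·X(r)/r^{n+2} − 4c/√r. -/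
open Filter

/-- Under Cao–Zhou's identity, `X ≥ 0` on `(0,∞)`,
`P(s) = V(s)/s^n − 4X(s)/s^{n+2} → L`, and `X(s) ≤ c·s^{n−1/2}` for `s ≥ r` with
`r ≥ √(2(n+2))`, one has `L ≥ V(r)/r^n − 4X(r)/r^{n+2} − 4c/√r`. -/
theorem avr_quantitative_lower (n : ℕ) (hn : 1 ≤ n) (V X : ℝ → ℝ)
    (hV : ∀ s > (0 : ℝ), DifferentiableAt ℝ V s)
    (hX : ∀ s > (0 : ℝ), DifferentiableAt ℝ X s)
    (hid : ∀ s > (0 : ℝ),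
      (n : ℝ) * V s - s * deriv V s = 2 * X s - (4 / s) * deriv X s)
    (hX0 : ∀ s > (0 : ℝ), 0 ≤ X s)
    (L : ℝ)
    (hP : Tendsto (fun s => V s / s ^ n - 4 * X s / s ^ (n + 2)) atTop (nhds L))
    (r c : ℝ) (hr : Real.sqrt (2 * ((n : ℝ) + 2)) ≤ r) (hc : 0 ≤ c)
    (hXle : ∀ s, r ≤ s → X s ≤ c * s ^ ((n : ℝ) - 1 / 2)) :
    V r / r ^ n - 4 * X r / r ^ (n + 2) - 4 * c / Real.sqrt r ≤ L := by
  obtain ⟨m, rfl⟩ : ∃ m, n = m + 1 := ⟨n - 1, (Nat.succ_pred_eq_of_pos hn).symm⟩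
  set n := m + 1 with hn_def
  have hK : (0 : ℝ) < 2 * ((n : ℝ) + 2) := by positivity
  have hr0 : 0 < r := lt_of_lt_of_le (Real.sqrt_pos.mpr hK) hr
  set G : ℝ → ℝ := fun s => V s / s ^ n - 4 * X s / s ^ (n + 2) - 4 * c / Real.sqrt s
    with hG_def
  -- derivative of G at every s ≥ r, with nonnegativity
  have key : ∀ s, r ≤ s → ∃ g, HasDerivAt G g s ∧ 0 ≤ g := by
    intro s hs
    have hs0 : 0 < s := lt_of_lt_of_le hr0 hs
    have hsq : Real.sqrt s ^ 2 = s := Real.sq_sqrt hs0.le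
    have hsqrt_pos : 0 < Real.sqrt s := Real.sqrt_pos.mpr hs0
    have h1 : HasDerivAt (fun t => V t / t ^ n)
        ((deriv V s * s ^ n - V s * ((n : ℝ) * s ^ (n - 1))) / (s ^ n) ^ 2) s :=
      ((hV s hs0).hasDerivAt).div (hasDerivAt_pow n s) (pow_ne_zero _ hs0.ne')
    have h2 : HasDerivAt (fun t => 4 * X t / t ^ (n + 2))
        ((4 * deriv X s * s ^ (n + 2) - 4 * X s * ((↑(n + 2) : ℝ) * s ^ (n + 2 - 1)))
          / (s ^ (n + 2)) ^ 2) s :=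
      (((hX s hs0).hasDerivAt).const_mul 4).div (hasDerivAt_pow (n + 2) s)
        (pow_ne_zero _ hs0.ne')
    have h3 : HasDerivAt (fun t => 4 * c / Real.sqrt t)
        ((0 * Real.sqrt s - 4 * c * (1 / (2 * Real.sqrt s))) / Real.sqrt s ^ 2) s :=
      (hasDerivAt_const s (4 * c)).div (Real.hasDerivAt_sqrt hs0.ne') hsqrt_pos.ne'
    refine ⟨_, (h1.sub h2).sub h3, ?_⟩
    -- simplify the derivative to the clean form
    have hid' := hid s hs0
    have hclean : (deriv V s * s ^ n - V s * ((n : ℝ) * s ^ (n - 1))) / (s ^ n) ^ 2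
        - (4 * deriv X s * s ^ (n + 2) - 4 * X s * ((↑(n + 2) : ℝ) * s ^ (n + 2 - 1)))
          / (s ^ (n + 2)) ^ 2
        - (0 * Real.sqrt s - 4 * c * (1 / (2 * Real.sqrt s))) / Real.sqrt s ^ 2
        = 2 * X s * (2 * ((n : ℝ) + 2) - s ^ 2) / s ^ (n + 3)
          + 2 * c / (s * Real.sqrt s) := by
      have h4 : ((n : ℝ) * V s - s * deriv V s) * s = 2 * X s * s - 4 * deriv X s := by
        rw [hid']
        field_simp
      have hdV : deriv V s = ((n : ℝ) * V s - 2 * X s) / s + 4 * deriv X s / s ^ 2 := by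
        field_simp
        first
        | linear_combination -h4
        | linear_combination h4
        | linear_combination s * h4
        | linear_combination -s * h4
      simp only [hn_def]
      rw [hsq]
      have hm : m + 1 - 1 = m := rfl
      have hm2 : m + 1 + 2 - 1 = m + 2 := rfl
      rw [hm, hm2, hdV]
      have hsne : s ≠ 0 := hs0.ne'
      have hsqne : Real.sqrt s ≠ 0 := hsqrt_pos.ne'
      field_simp
      simp only [hn_def]
      push_cast
      ring
    rw [hclean]
    -- now prove nonnegativity of the clean form
    have hs2 : 2 * ((n : ℝ) + 2) ≤ s ^ 2 := by
      have : Real.sqrt (2 * ((n : ℝ) + 2)) ^ 2 ≤ s ^ 2 := by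
        apply pow_le_pow_left₀ (Real.sqrt_nonneg _) (le_trans hr hs)
      rwa [Real.sq_sqrt hK.le] at this
    have hXs := hXle s hs
    have hrpow : s ^ ((n : ℝ) - 1 / 2) = s ^ n / Real.sqrt s := by
      rw [show ((n : ℝ) - 1 / 2) = (n : ℕ) + (-(1 / 2) : ℝ) by push_cast; ring,
        Real.rpow_add hs0, Real.rpow_natCast, Real.rpow_neg hs0.le,
        Real.sqrt_eq_rpow]
      norm_num [div_eq_mul_inv]
    rw [hrpow] at hXs
    have hXsq : X s * Real.sqrt s ≤ c * s ^ n := by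
      have h := mul_le_mul_of_nonneg_right hXs hsqrt_pos.le
      calc X s * Real.sqrt s ≤ c * (s ^ n / Real.sqrt s) * Real.sqrt s := h
        _ = c * s ^ n := by field_simp
    have hXnn := hX0 s hs0
    have hA : (0 : ℝ) < s ^ (n + 3) := by positivity
    have hB : (0 : ℝ) < s * Real.sqrt s := by positivity
    have hkey : 2 * X s * (s ^ 2 - 2 * ((n : ℝ) + 2)) / s ^ (n + 3)
        ≤ 2 * c / (s * Real.sqrt s) := by
      rw [div_le_div_iff₀ hA hB]
      have e1 : 2 * X s * (s ^ 2 - 2 * ((n : ℝ) + 2)) * (s * Real.sqrt s)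
          = 2 * (X s * Real.sqrt s) * ((s ^ 2 - 2 * ((n : ℝ) + 2)) * s) := by ring
      have e2 : 2 * c * s ^ (n + 3) = 2 * (c * s ^ n) * (s ^ 2 * s) := by ring
      rw [e1, e2]
      have hfac : (0 : ℝ) ≤ (s ^ 2 - 2 * ((n : ℝ) + 2)) * s := by
        apply mul_nonneg (by linarith) hs0.le
      have step1 : 2 * (X s * Real.sqrt s) * ((s ^ 2 - 2 * ((n : ℝ) + 2)) * s)
          ≤ 2 * (c * s ^ n) * ((s ^ 2 - 2 * ((n : ℝ) + 2)) * s) := by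
        apply mul_le_mul_of_nonneg_right _ hfac
        linarith
      have step2 : 2 * (c * s ^ n) * ((s ^ 2 - 2 * ((n : ℝ) + 2)) * s)
          ≤ 2 * (c * s ^ n) * (s ^ 2 * s) := by
        apply mul_le_mul_of_nonneg_left _ (by positivity)
        apply mul_le_mul_of_nonneg_right (by linarith) hs0.le
      linarith
    have : 2 * X s * (2 * ((n : ℝ) + 2) - s ^ 2) / s ^ (n + 3)
        = -(2 * X s * (s ^ 2 - 2 * ((n : ℝ) + 2)) / s ^ (n + 3)) := by ring
    rw [this]
    linarith
  -- G is monotone on [r, ∞)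
  have hdiff : ∀ s ∈ Set.Ici r, DifferentiableAt ℝ G s := by
    intro s hs
    obtain ⟨g, hg, _⟩ := key s hs
    exact hg.differentiableAt
  have mono : MonotoneOn G (Set.Ici r) := by
    apply monotoneOn_of_deriv_nonneg (convex_Ici r)
    · exact fun s hs => (hdiff s hs).continuousAt.continuousWithinAt
    · intro s hs
      rw [interior_Ici] at hs
      exact (hdiff s (Set.mem_Ici.mpr (le_of_lt hs))).differentiableWithinAt
    · intro s hs
      rw [interior_Ici] at hs
      obtain ⟨g, hg, hg0⟩ := key s (le_of_lt hs)
      rw [hg.deriv]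
      exact hg0
  -- G tends to L
  have hsqrtTop : Tendsto Real.sqrt atTop atTop := by
    rw [funext Real.sqrt_eq_rpow]
    exact tendsto_rpow_atTop (by norm_num)
  have h0 : Tendsto (fun s => 4 * c / Real.sqrt s) atTop (nhds 0) :=
    Tendsto.div_atTop tendsto_const_nhds hsqrtTop
  have hGL : Tendsto G atTop (nhds L) := by
    have := hP.sub h0
    simpa using this
  have hev : ∀ᶠ s in atTop, G r ≤ G s := by
    filter_upwards [eventually_ge_atTop r] with s hs
    exact mono Set.self_mem_Ici hs hs
  exact ge_of_tendsto hGL hev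
end
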